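/- Let d ≥ 3 and let P(x) = (x−x₁)(x−x₂)⋯(x−x_d) with real roots x₁ < x₂ < ⋯ < x_d. Let ξ₁ < ξ₂ < ⋯ < ξ_{d−1} be the critical points of P (the roots of P′), with ξ_j ∈ (x_j, x_{j+1}), and set z_j = (x_j + x_{j+1})/2. Then ξ₁ < z₁ and ξ_{d−1} > z_{d−1}; consequently ξ_{d−1} − ξ₁ > z_{d−1} − z₁. -/

import Mathlib

/-- Logarithmic derivative of a product of linear factors: if the derivative
vanishes at a non-root, the sum of reciprocals of the factors vanishes. -/
lemma sum_inv_eq_zero_of_deriv_prod (d : ℕ) (x : ℕ → ℝ) (ξ : ℝ)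
    (hne : ∀ i ∈ Finset.range d, ξ - x i ≠ 0)
    (h : deriv (fun t : ℝ => ∏ i ∈ Finset.range d, (t - x i)) ξ = 0) :
    ∑ i ∈ Finset.range d, (ξ - x i)⁻¹ = 0 := by
  have hD : HasDerivAt (fun t : ℝ => ∏ i ∈ Finset.range d, (t - x i))
      (∑ i ∈ Finset.range d, (∏ j ∈ (Finset.range d).erase i, (ξ - x j)) • (1:ℝ)) ξ :=
    HasDerivAt.fun_finsetProd (fun i _ => (hasDerivAt_id ξ).sub_const (x i))
  have hsum : ∑ i ∈ Finset.range d, (∏ j ∈ (Finset.range d).erase i, (ξ - x j)) = 0 := by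
    simpa using hD.deriv.symm.trans h
  have hprod : (∏ i ∈ Finset.range d, (ξ - x i)) ≠ 0 := Finset.prod_ne_zero_iff.mpr hne
  have heq : ∀ i ∈ Finset.range d, (∏ j ∈ (Finset.range d).erase i, (ξ - x j))
      = (∏ j ∈ Finset.range d, (ξ - x j)) * (ξ - x i)⁻¹ := by
    intro i hi
    rw [← Finset.prod_erase_mul _ _ hi, mul_assoc, mul_inv_cancel₀ (hne i hi), mul_one]
  rw [Finset.sum_congr rfl heq, ← Finset.mul_sum] at hsum
  exact (mul_eq_zero.mp hsum).resolve_left hprod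

/-- For a strictly hyperbolic polynomial `P(x) = ∏_{i=0}^{d-1} (x - x i)` of degree `d ≥ 3`
with roots `x 0 < x 1 < ⋯ < x (d-1)` and critical points `ξ j ∈ (x j, x (j+1))`
(roots of `P'`), setting `z j = (x j + x (j + 1))/2`, one has `ξ 0 < z 0`,
`ξ (d-2) > z (d-2)` and consequently `ξ (d-2) - ξ 0 > z (d-2) - z 0`. -/
theorem midpoints_extreme_critical_points
    (d : ℕ) (hd : 3 ≤ d)
    (x : ℕ → ℝ) (hx : ∀ i, i + 1 < d → x i < x (i + 1))
    (ξ : ℕ → ℝ)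
    (hξmem : ∀ j, j + 1 < d → ξ j ∈ Set.Ioo (x j) (x (j + 1)))
    (hξcrit : ∀ j, j + 1 < d →
      deriv (fun t : ℝ => ∏ i ∈ Finset.range d, (t - x i)) (ξ j) = 0)
    (z : ℕ → ℝ) (hz : ∀ j, z j = (x j + x (j + 1)) / 2) :
    ξ 0 < z 0 ∧ z (d - 2) < ξ (d - 2) ∧ z (d - 2) - z 0 < ξ (d - 2) - ξ 0 := by
  have hmono : ∀ j, j < d → ∀ i, i < j → x i < x j := by
    intro j
    induction j with
    | zero => intro _ i h; omega
    | succ k ih =>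
      intro hk i hik
      rcases Nat.lt_succ_iff_lt_or_eq.mp hik with h | h
      · exact (ih (by omega) i h).trans (hx k hk)
      · subst h; exact hx i hk
  -- First critical point
  obtain ⟨h0l, h0r⟩ := hξmem 0 (by omega)
  have hlt0 : ∀ i, 1 ≤ i → i < d → ξ 0 < x i := by
    intro i h1 h2
    rcases Nat.eq_or_lt_of_le h1 with h | h
    · simpa [← h] using h0r
    · exact h0r.trans (hmono i h2 1 h)
  have hne0 : ∀ i ∈ Finset.range d, ξ 0 - x i ≠ 0 := by
    intro i hi
    rcases Nat.eq_zero_or_pos i with h | h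
    · subst h; exact sub_ne_zero_of_ne (ne_of_gt h0l)
    · exact sub_ne_zero_of_ne (ne_of_lt (hlt0 i h (Finset.mem_range.mp hi)))
  have hS0 := sum_inv_eq_zero_of_deriv_prod d x (ξ 0) hne0 (hξcrit 0 (by omega))
  have h0mem : (0 : ℕ) ∈ Finset.range d := Finset.mem_range.mpr (by omega)
  rw [← Finset.add_sum_erase _ _ h0mem] at hS0
  have hS0' : (ξ 0 - x 0)⁻¹ = ∑ i ∈ (Finset.range d).erase 0, (x i - ξ 0)⁻¹ := by
    have : ∑ i ∈ (Finset.range d).erase 0, (x i - ξ 0)⁻¹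
        = - ∑ i ∈ (Finset.range d).erase 0, (ξ 0 - x i)⁻¹ := by
      rw [← Finset.sum_neg_distrib]
      refine Finset.sum_congr rfl fun i hi => ?_
      rw [← inv_neg, neg_sub]
    rw [this]; linarith
  have h1mem : (1 : ℕ) ∈ (Finset.range d).erase 0 := by
    simp [Finset.mem_erase, Finset.mem_range]; omega
  rw [← Finset.add_sum_erase _ _ h1mem] at hS0'
  have h2mem : (2 : ℕ) ∈ ((Finset.range d).erase 0).erase 1 := by
    simp [Finset.mem_erase, Finset.mem_range]; omega
  have hrest0 : (0:ℝ) < ∑ i ∈ ((Finset.range d).erase 0).erase 1, (x i - ξ 0)⁻¹ := by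
    refine Finset.sum_pos (fun i hi => ?_) ⟨2, h2mem⟩
    have hi' := hi
    simp only [Finset.mem_erase, Finset.mem_range] at hi'
    exact inv_pos.mpr (sub_pos.mpr (hlt0 i (by omega) hi'.2.2))
  have hkey0 : (x 1 - ξ 0)⁻¹ < (ξ 0 - x 0)⁻¹ := by linarith
  have hz0 : ξ 0 < z 0 := by
    have ha : (0:ℝ) < ξ 0 - x 0 := sub_pos.mpr h0l
    have hb : (0:ℝ) < x 1 - ξ 0 := sub_pos.mpr h0r
    have : ξ 0 - x 0 < x 1 - ξ 0 := by
      by_contra hcon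
      push_neg at hcon
      exact absurd (inv_anti₀ hb hcon) (not_le.mpr hkey0)
    rw [hz 0]; linarith
  -- Last critical point
  set m := d - 2 with hm
  have hm1 : m + 1 = d - 1 := by omega
  obtain ⟨hml, hmr⟩ := hξmem m (by omega)
  have hgt : ∀ i, i ≤ m → x i < ξ m := by
    intro i h
    rcases Nat.eq_or_lt_of_le h with h' | h'
    · subst h'; exact hml
    · exact (hmono m (by omega) i h').trans hml
  have hnem : ∀ i ∈ Finset.range d, ξ m - x i ≠ 0 := by
    intro i hi
    have hi' := Finset.mem_range.mp hi
    rcases Nat.lt_or_ge i (m + 1) with h | h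
    · exact sub_ne_zero_of_ne (ne_of_gt (hgt i (by omega)))
    · have : i = m + 1 := by omega
      subst this
      exact sub_ne_zero_of_ne (ne_of_lt hmr)
  have hSm := sum_inv_eq_zero_of_deriv_prod d x (ξ m) hnem (hξcrit m (by omega))
  have htopmem : m + 1 ∈ Finset.range d := Finset.mem_range.mpr (by omega)
  rw [← Finset.add_sum_erase _ _ htopmem] at hSm
  have hSm' : (x (m + 1) - ξ m)⁻¹ = ∑ i ∈ (Finset.range d).erase (m+1), (ξ m - x i)⁻¹ := by
    have : (x (m + 1) - ξ m)⁻¹ = - (ξ m - x (m+1))⁻¹ := by rw [← inv_neg, neg_sub]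
    rw [this]; linarith
  have hmmem : m ∈ (Finset.range d).erase (m+1) := by
    simp [Finset.mem_erase, Finset.mem_range]; omega
  rw [← Finset.add_sum_erase _ _ hmmem] at hSm'
  have h0mem' : (0:ℕ) ∈ ((Finset.range d).erase (m+1)).erase m := by
    simp [Finset.mem_erase, Finset.mem_range]; omega
  have hrestm : (0:ℝ) < ∑ i ∈ ((Finset.range d).erase (m+1)).erase m, (ξ m - x i)⁻¹ := by
    refine Finset.sum_pos (fun i hi => ?_) ⟨0, h0mem'⟩
    have hi' := hi
    simp only [Finset.mem_erase, Finset.mem_range] at hi'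
    exact inv_pos.mpr (sub_pos.mpr (hgt i (by omega)))
  have hkeym : (ξ m - x m)⁻¹ < (x (m+1) - ξ m)⁻¹ := by linarith
  have hzm : z m < ξ m := by
    have ha : (0:ℝ) < ξ m - x m := sub_pos.mpr hml
    have hb : (0:ℝ) < x (m+1) - ξ m := sub_pos.mpr hmr
    have : x (m+1) - ξ m < ξ m - x m := by
      by_contra hcon
      push_neg at hcon
      exact absurd (inv_anti₀ ha hcon) (not_le.mpr hkeym)
    rw [hz m]; linarith
  exact ⟨hz0, hzm, by linarith⟩
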